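/- Let H(x,y) = ∑_{s≥0} ∑_{p=0}^{s} H^{(p,s-p)}(0,0)/(p!(s−p)!) x^p y^{s−p} be a symmetric formal power series in two variables (H(x,y) = H(y,x)), let k ≥ 2, and γ = e^{2πi/k}. Then ∑_{1 ≤ j < l ≤ k} H(γ^j x, γ^l x) γ^{j+l} · x^{2} / (k² x^{2(k-1)}), expanded and evaluated for the residue in λ = x^k at 0, yields: −(residue) = (1/(2k)) ∑_{p=0}^{k-2} H^{(p,k-2-p)}(0,0)/(p!(k−2−p)!). Equivalently, ∑_{1≤j<l≤k} γ^{(p+1)l + (k−p−1)j} summed appropriately gives −k/2 times the diagonal restriction, using ∑ of the geometric progressions. -/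

import Mathlib

open Complex

/-- The combinatorial core of the Bergmann-kernel residue lemma.  Let `k ≥ 2`,
`γ = e^{2πi/k}`, and let `H(x,y) = ∑_{s,p} c_{p,s-p}/(p!(s−p)!) x^p y^{s−p}` be
a symmetric formal power series (`c p q = c q p`).  Set
`S p = ∑_{1≤j<l≤k} γ^{(p+1)l + (k−p−1)j}`.  Then the geometric-progression
identity `S p + S (k−2−p) = −k` holds (so each `S p` contributes `−k/2` after
symmetrization), and the residue computation yields
`−(1/k²) ∑_{p=0}^{k-2} c_{p,k-2-p}/(p!(k−2−p)!) · S p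
  = (1/(2k)) ∑_{p=0}^{k-2} c_{p,k-2-p}/(p!(k−2−p)!)`,
which equals `(1/(12k)) · R^{(k-2)}(0)/(k−2)!` with `R(x) = 6 H(x,x)`, i.e.
`(1/(12k)) · 6 ∑_{p=0}^{k-2} c_{p,k-2-p}/(p!(k−2−p)!)`. -/
theorem stmt19 (k : ℕ) (hk : 2 ≤ k) (c : ℕ → ℕ → ℂ) (hsym : ∀ p q, c p q = c q p) :
    let γ : ℂ := Complex.exp (2 * Real.pi * Complex.I / k)
    let S : ℕ → ℂ := fun p => ∑ j ∈ Finset.Icc 1 k, ∑ l ∈ Finset.Icc 1 k,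
      if j < l then γ ^ ((p + 1) * l + (k - p - 1) * j) else 0
    let T : ℂ := ∑ p ∈ Finset.range (k - 1),
      c p (k - 2 - p) / ((p.factorial : ℂ) * ((k - 2 - p).factorial : ℂ))
    (∀ p, p ≤ k - 2 → S p + S (k - 2 - p) = -(k : ℂ)) ∧
    (-(1 / (k : ℂ) ^ 2) * ∑ p ∈ Finset.range (k - 1),
        (c p (k - 2 - p) / ((p.factorial : ℂ) * ((k - 2 - p).factorial : ℂ))) * S p
      = 1 / (2 * (k : ℂ)) * T) ∧
    (1 / (2 * (k : ℂ)) * T = 1 / (12 * (k : ℂ)) * (6 * T)) := by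
  intro γ S T
  have hk0 : (k : ℂ) ≠ 0 := Nat.cast_ne_zero.2 (by omega)
  have hprim : IsPrimitiveRoot γ k := Complex.isPrimitiveRoot_exp k (by omega)
  have hγk : γ ^ k = 1 := hprim.pow_eq_one
  have hgeom : ∀ a : ℕ, 0 < a → a < k → ∑ l ∈ Finset.Icc 1 k, γ ^ (a * l) = 0 := by
    intro a ha hak
    have hz1 : γ ^ a ≠ 1 := hprim.pow_ne_one_of_pos_of_lt ha.ne' hak
    have h1 : ∑ l ∈ Finset.Icc 1 k, γ ^ (a * l)
        = γ ^ a * ∑ l ∈ Finset.range k, (γ ^ a) ^ l := by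
      rw [Finset.mul_sum, ← Finset.Ico_add_one_right_eq_Icc, Finset.sum_Ico_eq_sum_range]
      refine Finset.sum_congr rfl fun i _ => ?_
      rw [← pow_mul, ← pow_add]
      ring_nf
    rw [h1, geom_sum_eq hz1, ← pow_mul, mul_comm a k, pow_mul, hγk, one_pow]
    simp
  -- Key identity
  have hS : ∀ p, p ≤ k - 2 → S p + S (k - 2 - p) = -(k : ℂ) := by
    intro p hp
    have ha1 : k - (k - 2 - p) - 1 = p + 1 := by omega
    have hb1 : (k - 2 - p) + 1 = k - p - 1 := by omega
    set a := p + 1 with hadef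
    set b := k - p - 1 with hbdef
    have hab : a + b = k := by omega
    have ha : 0 < a := by omega
    have hak : a < k := by omega
    have hbpos : 0 < b := by omega
    have hbk : b < k := by omega
    have hS2 : S (k - 2 - p) = ∑ j ∈ Finset.Icc 1 k, ∑ l ∈ Finset.Icc 1 k,
        if j < l then γ ^ (b * l + a * j) else 0 := by
      simp only [S, hb1, ha1]
    have hS2' : S (k - 2 - p) = ∑ j ∈ Finset.Icc 1 k, ∑ l ∈ Finset.Icc 1 k,
        if l < j then γ ^ (a * l + b * j) else 0 := by
      rw [hS2, Finset.sum_comm]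
      refine Finset.sum_congr rfl fun j _ => Finset.sum_congr rfl fun l _ => ?_
      congr 1
      ring_nf
    have hSp : S p = ∑ j ∈ Finset.Icc 1 k, ∑ l ∈ Finset.Icc 1 k,
        if j < l then γ ^ (a * l + b * j) else 0 := rfl
    rw [hSp, hS2', ← Finset.sum_add_distrib]
    have step : ∀ j ∈ Finset.Icc 1 k,
        ((∑ l ∈ Finset.Icc 1 k, if j < l then γ ^ (a * l + b * j) else 0)
          + ∑ l ∈ Finset.Icc 1 k, if l < j then γ ^ (a * l + b * j) else 0)
        = (∑ l ∈ Finset.Icc 1 k, γ ^ (a * l + b * j)) - 1 := by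
      intro j hj
      rw [← Finset.sum_add_distrib]
      have : ∀ l, ((if j < l then γ ^ (a * l + b * j) else 0)
          + if l < j then γ ^ (a * l + b * j) else 0)
          = γ ^ (a * l + b * j) - (if l = j then γ ^ (a * l + b * j) else 0) := by
        intro l
        rcases lt_trichotomy j l with h | h | h
        · simp [h, not_lt.2 h.le, h.ne']
        · simp [h]
        · simp [h, not_lt.2 h.le, h.ne]
      simp only [this]
      rw [Finset.sum_sub_distrib, Finset.sum_ite_eq' (Finset.Icc 1 k) j
        (fun l => γ ^ (a * l + b * j)), if_pos hj]
      congr 1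
      have : a * j + b * j = k * j := by rw [← add_mul, hab]
      rw [this, pow_mul, hγk, one_pow]
    rw [Finset.sum_congr rfl step, Finset.sum_sub_distrib]
    have hz : ∀ j ∈ Finset.Icc 1 k, ∑ l ∈ Finset.Icc 1 k, γ ^ (a * l + b * j)
        = 0 := by
      intro j _
      have : ∀ l, γ ^ (a * l + b * j) = γ ^ (a * l) * γ ^ (b * j) := fun l => pow_add γ _ _
      simp only [this, ← Finset.sum_mul, hgeom a ha hak, zero_mul]
    rw [Finset.sum_congr rfl hz, Finset.sum_const_zero, Finset.sum_const,
      Nat.card_Icc]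
    simp
  refine ⟨hS, ?_, ?_⟩
  · -- symmetry of coefficients
    set f : ℕ → ℂ := fun p => c p (k - 2 - p) /
      ((p.factorial : ℂ) * ((k - 2 - p).factorial : ℂ)) with hf
    have hfsym : ∀ p ∈ Finset.range (k - 1), f (k - 2 - p) = f p := by
      intro p hp
      have hp' : p ≤ k - 2 := by
        simp only [Finset.mem_range] at hp; omega
      have h1 : k - 2 - (k - 2 - p) = p := by omega
      simp only [hf, h1, hsym p (k - 2 - p), mul_comm]
    have hre : ∑ p ∈ Finset.range (k - 1), f p * S p
        = ∑ p ∈ Finset.range (k - 1), f p * S (k - 2 - p) := by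
      refine Finset.sum_nbij' (fun p => k - 2 - p) (fun p => k - 2 - p)
        ?_ ?_ ?_ ?_ ?_
      · intro p hp; simp only [Finset.mem_range] at *; omega
      · intro p hp; simp only [Finset.mem_range] at *; omega
      · intro p hp; simp only [Finset.mem_range] at *; omega
      · intro p hp; simp only [Finset.mem_range] at *; omega
      · intro p hp
        have h1 : k - 2 - (k - 2 - p) = p := by
          simp only [Finset.mem_range] at hp; omega
        rw [hfsym p hp, h1]
    have h2A : (∑ p ∈ Finset.range (k - 1), f p * S p)
        + ∑ p ∈ Finset.range (k - 1), f p * S p = -(k : ℂ) * T := by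
      nth_rewrite 2 [hre]
      rw [← Finset.sum_add_distrib]
      have : ∀ p ∈ Finset.range (k - 1), f p * S p + f p * S (k - 2 - p)
          = -(k : ℂ) * f p := by
        intro p hp
        have hp' : p ≤ k - 2 := by simp only [Finset.mem_range] at hp; omega
        rw [← mul_add, hS p hp']
        ring
      rw [Finset.sum_congr rfl this, ← Finset.mul_sum]
    have hTd : T = ∑ p ∈ Finset.range (k - 1), f p := rfl
    rw [hTd] at h2A ⊢
    show -(1 / (k : ℂ) ^ 2) * (∑ p ∈ Finset.range (k - 1), f p * S p)
      = 1 / (2 * (k : ℂ)) * ∑ p ∈ Finset.range (k - 1), f p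
    have hk2 : ((k : ℂ) ^ 2) ≠ 0 := pow_ne_zero _ hk0
    field_simp
    linear_combination (-1 : ℂ) * h2A
  · field_simp
    ring
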